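/- Let Q be a routing matrix, let (e, f, u) be a fluid model solution, and let t > 0 be a point at which u_i, e_{ii}, and all e_{ji}, f_{ji} are differentiable. If u_i′(t) > 0, then e_{ii}(t) = 0, e_{ii}′(t) = 0, and consequently λ_i (1 − u_i′(t)) = Σ_{j ≠ i} μ_{ji} e_{ji}(t) + Q_{ii} Σ_{j=1}^r μ_{ji} f_{ji}(t). -/

import Mathlib

open Finset Filter Topology MeasureTheory intervalIntegral

abbrev Mat (r : ℕ) := Fin r → Fin r → ℝ

structure NetParams (r : ℕ) where
  lam : Fin r → ℝ
  mu : Mat r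
  P : Mat r
  lam_pos : ∀ i, 0 < lam i
  mu_pos : ∀ i j, 0 < mu i j
  P_nonneg : ∀ i j, 0 ≤ P i j
  P_rowsum : ∀ i, ∑ j, P i j = 1

def IsRouting {r : ℕ} (q : Mat r) : Prop :=
  (∀ i j, 0 ≤ q i j) ∧ ∀ i, ∑ j, q i j = 1

def MemT {r : ℕ} (e f : Mat r) : Prop :=
  (∀ i j, e i j ∈ Set.Icc (0:ℝ) 1) ∧ (∀ i j, f i j ∈ Set.Icc (0:ℝ) 1) ∧
    (∑ i, ∑ j, (e i j + f i j)) = 1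

open scoped Classical in
/-- The Lebesgue–Stieltjes measure associated with a non-decreasing `g : ℝ → ℝ`
(junk value `0` if `g` is not monotone). -/
noncomputable def lsMeasure (g : ℝ → ℝ) : Measure ℝ :=
  if h : Monotone g then h.stieltjesFunction.measure else 0

/-- A fluid model solution `(e, f, u)` for the ridesharing network with static
routing matrix `Q`.  All functions are defined on `ℝ`, but only their values
on `[0, ∞)` are relevant; `u` is extended by `0` on `(-∞, 0]`. -/
structure IsFluidSol {r : ℕ} (np : NetParams r) (Q : Mat r) (e f : ℝ → Mat r)
    (u : ℝ → Fin r → ℝ) : Prop where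
  cont_e : ∀ i j, ContinuousOn (fun t => e t i j) (Set.Ici 0)
  cont_f : ∀ i j, ContinuousOn (fun t => f t i j) (Set.Ici 0)
  mem_T : ∀ t, 0 ≤ t → MemT (e t) (f t)
  u_nonneg : ∀ t i, 0 ≤ u t i
  u_mono : ∀ i, Monotone fun t => u t i
  u_zero : ∀ i, ∀ t ≤ (0:ℝ), u t i = 0
  eq_f : ∀ i j, ∀ t, 0 ≤ t →
    f t i j = f 0 i j + np.lam i * np.P i j * (t - u t i)
      - np.mu i j * ∫ s in (0:ℝ)..t, f s i j
  eq_e_off : ∀ i j, i ≠ j → ∀ t, 0 ≤ t →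
    e t i j = e 0 i j - np.mu i j * (∫ s in (0:ℝ)..t, e s i j)
      + Q i j * ∑ k, np.mu k i * ∫ s in (0:ℝ)..t, f s k i
  eq_e_diag : ∀ i, ∀ t, 0 ≤ t →
    e t i i = e 0 i i - np.lam i * (t - u t i)
      + (∑ j ∈ Finset.univ.filter (fun j => j ≠ i), np.mu j i * ∫ s in (0:ℝ)..t, e s j i)
      + Q i i * ∑ j, np.mu j i * ∫ s in (0:ℝ)..t, f s j i
  compl : ∀ i, ∫⁻ s in Set.Ici (0:ℝ),
      ENNReal.ofReal (e s i i) ∂(lsMeasure fun t => u t i) = 0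

open scoped Classical in
/-- The equilibrium set ℰ associated to the routing matrix `Q`. -/
noncomputable def eqSet {r : ℕ} (np : NetParams r) (Q : Mat r) : Set (Mat r × Mat r) :=
  {p | MemT p.1 p.2 ∧ ∃ a : Fin r → ℝ, (∀ i, 0 ≤ a i ∧ a i ≤ 1) ∧
    (∀ i j, np.lam i * np.P i j * a i = np.mu i j * p.2 i j) ∧
    (∀ i j, i ≠ j → np.mu i j * p.1 i j = Q i j * ∑ k, np.mu k i * p.2 k i) ∧
    (∀ i, np.lam i * a i =
      (∑ k ∈ Finset.univ.filter (fun k => k ≠ i), np.mu k i * p.1 k i)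
        + Q i i * ∑ k, np.mu k i * p.2 k i) ∧
    (∀ i, (1 - a i) * p.1 i i = 0)}

/-- At a regular point `t > 0` with `u_i'(t) > 0`, one has `e_{ii}(t) = 0`,
`e_{ii}'(t) = 0`, and `λ_i (1 − u_i'(t)) = Σ_{j≠i} μ_{ji} e_{ji}(t) + Q_{ii} Σ_j μ_{ji} f_{ji}(t)`. -/
theorem stmt_12 {r : ℕ} (hr : 1 ≤ r) (np : NetParams r)
    (Q : Mat r) (hQ : IsRouting Q)
    (e f : ℝ → Mat r) (u : ℝ → Fin r → ℝ)
    (hsol : IsFluidSol np Q e f u)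
    (i : Fin r) (t : ℝ) (ht : 0 < t)
    (du : ℝ) (hdu : HasDerivAt (fun s => u s i) du t)
    (de : ℝ) (hde : HasDerivAt (fun s => e s i i) de t)
    (hdiff_e : ∀ j, DifferentiableAt ℝ (fun s => e s j i) t)
    (hdiff_f : ∀ j, DifferentiableAt ℝ (fun s => f s j i) t)
    (hdu_pos : 0 < du) :
    e t i i = 0 ∧ de = 0 ∧
      np.lam i * (1 - du) =
        (∑ j ∈ Finset.univ.filter (fun j => j ≠ i), np.mu j i * e t j i)
          + Q i i * ∑ j, np.mu j i * f t j i := by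
  
  classical
  have hm : Monotone fun s => u s i := hsol.u_mono i
  -- slope is eventually positive near t
  have hslope : ∀ᶠ s in 𝓝[≠] t, 0 < slope (fun s => u s i) t s :=
    (hasDerivAt_iff_tendsto_slope.1 hdu).eventually (eventually_gt_nhds hdu_pos)
  -- Step 1 : e t i i = 0
  have hE0 : e t i i = 0 := by
    by_contra hne
    have h0le : 0 ≤ e t i i := ((hsol.mem_T t ht.le).1 i i).1
    have hpos : 0 < e t i i := lt_of_le_of_ne h0le (Ne.symm hne)
    have hcontA : ContinuousAt (fun s => e s i i) t :=
      (hsol.cont_e i i).continuousAt (Ici_mem_nhds ht)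
    have hev : ∀ᶠ s in 𝓝 t, e t i i / 2 < e s i i :=
      hcontA.eventually (eventually_gt_nhds (half_lt_self hpos))
    have hcomb : ∀ᶠ s in 𝓝 t, s ≠ t → (e t i i / 2 < e s i i ∧
        0 < slope (fun s => u s i) t s) := by
      have := (hev.filter_mono nhdsWithin_le_nhds).and hslope
      exact eventually_nhdsWithin_iff.1 this
    obtain ⟨ε, hε, hball⟩ := Metric.eventually_nhds_iff.1 hcomb
    set ε' : ℝ := min ε t with hedef
    have hε' : 0 < ε' := lt_min hε ht
    set s₁ : ℝ := t - ε' / 2 with hs1def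
    set s₂ : ℝ := t + ε' / 2 with hs2def
    have hd1 : dist s₁ t < ε := by
      rw [Real.dist_eq]
      have : |s₁ - t| = ε' / 2 := by rw [hs1def]; rw [abs_of_nonpos] <;> [skip; linarith]; ring
      rw [this]; have := min_le_left ε t; linarith
    have hd2 : dist s₂ t < ε := by
      rw [Real.dist_eq]
      have : |s₂ - t| = ε' / 2 := by rw [hs2def]; rw [abs_of_nonneg] <;> [skip; linarith]; ring
      rw [this]; have := min_le_left ε t; linarith
    have hne1 : s₁ ≠ t := by rw [hs1def]; intro h; nlinarith
    have hne2 : s₂ ≠ t := by rw [hs2def]; intro h; nlinarith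
    have hg1 : u s₁ i < u t i := by
      have := (hball hd1 hne1).2
      rw [slope_def_field] at this
      have hlt : s₁ - t < 0 := by rw [hs1def]; linarith
      rcases div_pos_iff.1 this with ⟨_, hd⟩ | ⟨hn, _⟩
      · linarith
      · linarith
    have hg2 : u t i < u s₂ i := by
      have h2 := (hball hd2 hne2).2
      rw [slope_def_field] at h2
      have hgt : 0 < s₂ - t := by rw [hs2def]; linarith
      rcases div_pos_iff.1 h2 with ⟨hn, _⟩ | ⟨_, hd⟩
      · linarith
      · linarith
    -- the Stieltjes measure of (s₁, s₂] is positive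
    set μ : Measure ℝ := lsMeasure fun s => u s i with hμdef
    have hμeq : μ = hm.stieltjesFunction.measure := by
      rw [hμdef, lsMeasure, dif_pos hm]
    have hμIoc : 0 < μ (Set.Ioc s₁ s₂) := by
      rw [hμeq, StieltjesFunction.measure_Ioc]
      have hv2 : u s₂ i ≤ hm.stieltjesFunction s₂ := by
        rw [hm.stieltjesFunction_eq]; exact hm.le_rightLim le_rfl
      have hv1 : hm.stieltjesFunction s₁ ≤ u t i := by
        rw [hm.stieltjesFunction_eq]
        exact hm.rightLim_le (by rw [hs1def]; linarith)
      exact ENNReal.ofReal_pos.2 (by linarith)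
    have hsub : Set.Ioc s₁ s₂ ⊆ Set.Ici (0:ℝ) := by
      intro x hx
      have : 0 < s₁ := by
        have := min_le_right ε t; rw [hs1def]; linarith
      exact le_of_lt (lt_of_lt_of_le this hx.1.le)
    have hlb : ∀ x ∈ Set.Ioc s₁ s₂, ENNReal.ofReal (e t i i / 2) ≤ ENNReal.ofReal (e x i i) := by
      intro x hx
      have hdx : dist x t < ε := by
        rw [Real.dist_eq, abs_lt]
        have h1 : s₁ < x := hx.1
        have h2 : x ≤ s₂ := hx.2
        have := min_le_left ε t
        constructor <;> [rw [hs1def] at h1; rw [hs2def] at h2] <;> linarith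
      rcases eq_or_ne x t with rfl | hxt
      · exact ENNReal.ofReal_le_ofReal (by linarith)
      · exact ENNReal.ofReal_le_ofReal (le_of_lt (hball hdx hxt).1)
    have hchain : ENNReal.ofReal (e t i i / 2) * μ (Set.Ioc s₁ s₂)
        ≤ ∫⁻ s in Set.Ici (0:ℝ), ENNReal.ofReal (e s i i) ∂μ := by
      calc ENNReal.ofReal (e t i i / 2) * μ (Set.Ioc s₁ s₂)
          = ∫⁻ _ in Set.Ioc s₁ s₂, ENNReal.ofReal (e t i i / 2) ∂μ := by
            rw [MeasureTheory.setLIntegral_const]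
        _ ≤ ∫⁻ s in Set.Ioc s₁ s₂, ENNReal.ofReal (e s i i) ∂μ :=
            MeasureTheory.setLIntegral_mono' measurableSet_Ioc hlb
        _ ≤ ∫⁻ s in Set.Ici (0:ℝ), ENNReal.ofReal (e s i i) ∂μ :=
            MeasureTheory.lintegral_mono_set hsub
    rw [hsol.compl i] at hchain
    have : ENNReal.ofReal (e t i i / 2) * μ (Set.Ioc s₁ s₂) ≠ 0 := by
      apply mul_ne_zero
      · exact (ENNReal.ofReal_pos.2 (by linarith)).ne'
      · exact hμIoc.ne'
    exact this (le_antisymm hchain zero_le)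
  -- Step 2 : de = 0
  have hmin : IsLocalMin (fun s => e s i i) t := by
    filter_upwards [Ici_mem_nhds ht] with s hs
    simpa [hE0] using ((hsol.mem_T s hs).1 i i).1
  have hde0 : de = 0 := hmin.hasDerivAt_eq_zero hde
  -- Step 3 : derivative of the integral equation
  have hIcc : Set.uIcc (0:ℝ) t ⊆ Set.Ici 0 := by
    rw [Set.uIcc_of_le ht.le]; exact Set.Icc_subset_Ici_self
  have hFTCe : ∀ j, HasDerivAt (fun s => ∫ x in (0:ℝ)..s, e x j i) (e t j i) t := by
    intro j
    exact intervalIntegral.integral_hasDerivAt_right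
      (((hsol.cont_e j i).mono hIcc).intervalIntegrable)
      (ContinuousOn.stronglyMeasurableAtFilter isOpen_Ioi
        ((hsol.cont_e j i).mono Set.Ioi_subset_Ici_self) t ht)
      (hdiff_e j).continuousAt
  have hFTCf : ∀ j, HasDerivAt (fun s => ∫ x in (0:ℝ)..s, f x j i) (f t j i) t := by
    intro j
    exact intervalIntegral.integral_hasDerivAt_right
      (((hsol.cont_f j i).mono hIcc).intervalIntegrable)
      (ContinuousOn.stronglyMeasurableAtFilter isOpen_Ioi
        ((hsol.cont_f j i).mono Set.Ioi_subset_Ici_self) t ht)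
      (hdiff_f j).continuousAt
  have h1 : HasDerivAt (fun s => s - u s i) (1 - du) t := (hasDerivAt_id t).sub hdu
  have h2 : HasDerivAt (fun s => e 0 i i - np.lam i * (s - u s i))
      (-(np.lam i * (1 - du))) t := by
    simpa using (h1.const_mul (np.lam i)).const_sub (e 0 i i)
  have h3 : HasDerivAt (fun s => ∑ j ∈ Finset.univ.filter (fun j => j ≠ i),
      np.mu j i * ∫ x in (0:ℝ)..s, e x j i)
      (∑ j ∈ Finset.univ.filter (fun j => j ≠ i), np.mu j i * e t j i) t :=
    HasDerivAt.fun_sum fun j _ => (hFTCe j).const_mul (np.mu j i)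
  have h4 : HasDerivAt (fun s => Q i i * ∑ j, np.mu j i * ∫ x in (0:ℝ)..s, f x j i)
      (Q i i * ∑ j, np.mu j i * f t j i) t :=
    (HasDerivAt.fun_sum fun j _ => (hFTCf j).const_mul (np.mu j i)).const_mul (Q i i)
  have hF : HasDerivAt (fun s => e 0 i i - np.lam i * (s - u s i)
      + (∑ j ∈ Finset.univ.filter (fun j => j ≠ i),
          np.mu j i * ∫ x in (0:ℝ)..s, e x j i)
      + Q i i * ∑ j, np.mu j i * ∫ x in (0:ℝ)..s, f x j i)
      (-(np.lam i * (1 - du))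
        + (∑ j ∈ Finset.univ.filter (fun j => j ≠ i), np.mu j i * e t j i)
        + Q i i * ∑ j, np.mu j i * f t j i) t := (h2.add h3).add h4
  have heq : (fun s => e s i i) =ᶠ[𝓝 t] (fun s => e 0 i i - np.lam i * (s - u s i)
      + (∑ j ∈ Finset.univ.filter (fun j => j ≠ i),
          np.mu j i * ∫ x in (0:ℝ)..s, e x j i)
      + Q i i * ∑ j, np.mu j i * ∫ x in (0:ℝ)..s, f x j i) := by
    filter_upwards [Ici_mem_nhds ht] with s hs
    exact hsol.eq_e_diag i s hs
  have hde2 : HasDerivAt (fun s => e s i i)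
      (-(np.lam i * (1 - du))
        + (∑ j ∈ Finset.univ.filter (fun j => j ≠ i), np.mu j i * e t j i)
        + Q i i * ∑ j, np.mu j i * f t j i) t := hF.congr_of_eventuallyEq heq
  have huniq := hde.unique hde2
  refine ⟨hE0, hde0, by linarith [huniq, hde0]⟩
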